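/- If the cross-composition graph G(S) has an induced matching with at least k = n + |𝒞| - n/3 + 1 edges, then for some index ℓ in {1, ..., t} there exists an exact cover of X by sets of C_ℓ. -/

import Mathlib

open SimpleGraph

/-- `M` is a matching of `G`, viewed as a set of edges. -/
def MatchingEdges {V : Type*} (G : SimpleGraph V) (M : Set (Sym2 V)) : Prop :=
  M ⊆ G.edgeSet ∧ ∀ e ∈ M, ∀ f ∈ M, e ≠ f → ∀ v : V, v ∈ e → v ∉ f

/-- The set of `M`-saturated vertices. -/
def msat {V : Type*} (M : Set (Sym2 V)) : Set V := {v | ∃ e ∈ M, v ∈ e}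

/-- `M` is an induced matching of `G`. -/
def InducedMatchingEdges {V : Type*} (G : SimpleGraph V) (M : Set (Sym2 V)) : Prop :=
  MatchingEdges G M ∧
    ∀ u v : V, u ∈ msat M → v ∈ msat M → G.Adj u v → s(u, v) ∈ M

/-- The union `𝒞` of the families `C 1, ..., C t`. -/
def allSets (n t : ℕ) (C : Fin t → Finset (Finset (Fin n))) : Finset (Finset (Fin n)) :=
  Finset.univ.biUnion C

/-- Vertex type of the cross-composition graph: `Sum.inl a` is `v_a`;
`Sum.inr (Sum.inl (S, 0))` is the star center `w_S` and `Sum.inr (Sum.inl (S, 1))` is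
the leaf `w_S^*`; `Sum.inr (Sum.inr (Sum.inl ⟨S, x⟩))` is the interface vertex `w_{S,x}`
(for `x ∈ S`); `Sum.inr (Sum.inr (Sum.inr none))` is `q` and
`Sum.inr (Sum.inr (Sum.inr (some i)))` is `p_i`. -/
abbrev CCVert (n t : ℕ) (C : Fin t → Finset (Finset (Fin n))) : Type _ :=
  Fin n ⊕ (({S // S ∈ allSets n t C} × Fin 2) ⊕
    ((Σ S : {S // S ∈ allSets n t C}, {x : Fin n // x ∈ S.val}) ⊕ Option (Fin t)))

/-- The cross-composition graph `G(S)` (with `I` a star centered at `q`). -/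
def CCGraph (n t : ℕ) (C : Fin t → Finset (Finset (Fin n))) :
    SimpleGraph (CCVert n t C) :=
  SimpleGraph.fromRel (fun a b =>
    match a, b with
    -- v_a ~ w_{S,x} iff x = a
    | Sum.inl a, Sum.inr (Sum.inr (Sum.inl ⟨_, x⟩)) => (x : Fin n) = a
    -- w_S ~ w_S^*
    | Sum.inr (Sum.inl (S, _)), Sum.inr (Sum.inl (S', _)) => S = S'
    -- w_S ~ w_{S,x}
    | Sum.inr (Sum.inl (S, i)), Sum.inr (Sum.inr (Sum.inl ⟨S', _⟩)) => S = S' ∧ i = 0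
    -- q ~ p_i
    | Sum.inr (Sum.inr (Sum.inr o)), Sum.inr (Sum.inr (Sum.inr o')) =>
        o = none ∨ o' = none
    -- p_i ~ w_{S,x} iff S ∉ C i
    | Sum.inr (Sum.inr (Sum.inr (some i))), Sum.inr (Sum.inr (Sum.inl ⟨S, _⟩)) =>
        (S : Finset (Fin n)) ∉ C i
    | _, _ => False)

/-- There is an exact cover of `X = {1,...,n}` by sets of the family `F`: a subfamily of
`F` consisting of pairwise disjoint sets whose union is `X`. -/
def ExCov {n : ℕ} (F : Finset (Finset (Fin n))) : Prop :=
  ∃ T ⊆ F, (∀ s ∈ T, ∀ s' ∈ T, s ≠ s' → Disjoint s s') ∧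
    T.biUnion id = Finset.univ

section Helpers

variable {n t : ℕ} {C : Fin t → Finset (Finset (Fin n))}

/-- The vertex `v_a`. -/
abbrev vA (a : Fin n) : CCVert n t C := Sum.inl a

/-- The vertices `w_S` (for `i = 0`) and `w_S^*` (for `i = 1`). -/
abbrev wC (S : {S // S ∈ allSets n t C}) (i : Fin 2) : CCVert n t C := Sum.inr (Sum.inl (S, i))

/-- The interface vertex `w_{S,x}`. -/
abbrev wI (S : {S // S ∈ allSets n t C}) (x : {x : Fin n // x ∈ S.val}) : CCVert n t C :=
  Sum.inr (Sum.inr (Sum.inl ⟨S, x⟩))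

/-- The vertices `q` (for `o = none`) and `p_i` (for `o = some i`). -/
abbrev pQ (o : Option (Fin t)) : CCVert n t C := Sum.inr (Sum.inr (Sum.inr o))

/-- `e` is an edge belonging to the star of `S` (a `w`-edge or a `p`-edge). -/
def starE (S : {S // S ∈ allSets n t C}) (e : Sym2 (CCVert n t C)) : Prop :=
  e = s(wC S 0, wC S 1) ∨ (∃ x, e = s(wC S 0, wI S x)) ∨
    (∃ i : Fin t, ∃ x : {x : Fin n // x ∈ S.val}, e = s(pQ (some i), wI S x))

lemma adj_wC_wI (S : {S // S ∈ allSets n t C}) (x : {x : Fin n // x ∈ S.val}) :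
    (CCGraph n t C).Adj (wC S 0) (wI S x) := by
  rw [CCGraph, SimpleGraph.fromRel_adj]
  exact ⟨by simp, Or.inl ⟨rfl, rfl⟩⟩

lemma adj_p_wI {i : Fin t} {S : {S // S ∈ allSets n t C}} (h : S.val ∉ C i)
    (x : {x : Fin n // x ∈ S.val}) :
    (CCGraph n t C).Adj (pQ (some i)) (wI S x) := by
  rw [CCGraph, SimpleGraph.fromRel_adj]
  exact ⟨by simp, Or.inl h⟩

lemma p_edge_cond {i : Fin t} {S : {S // S ∈ allSets n t C}} {x : {x : Fin n // x ∈ S.val}}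
    (h : s(pQ (some i), wI S x) ∈ (CCGraph n t C).edgeSet) : S.val ∉ C i := by
  rw [SimpleGraph.mem_edgeSet, CCGraph, SimpleGraph.fromRel_adj] at h
  obtain ⟨-, h | h⟩ := h
  · exact h
  · exact h.elim

lemma edge_class {e : Sym2 (CCVert n t C)} (he : e ∈ (CCGraph n t C).edgeSet) :
    (∃ S : {S // S ∈ allSets n t C}, ∃ x : {x : Fin n // x ∈ S.val},
        e = s(vA x.val, wI S x)) ∨
    (∃ S : {S // S ∈ allSets n t C}, starE S e) ∨
    (∃ i, e = s(pQ none, pQ (some i))) := by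
  induction e using Sym2.ind with
  | _ u v =>
    rw [SimpleGraph.mem_edgeSet, CCGraph, SimpleGraph.fromRel_adj] at he
    obtain ⟨hne, h⟩ := he
    rcases u with a | (⟨S, i⟩ | (⟨S, x⟩ | (_ | i))) <;>
      rcases v with a' | (⟨S', i'⟩ | (⟨S', x'⟩ | (_ | i'))) <;>
      simp only [or_false, false_or, or_self, reduceCtorEq] at h
    · -- vA a, wI S' x'
      exact Or.inl ⟨S', x', by rw [h]⟩
    · -- wC S i, wC S' i'
      have hS : S = S' := h.elim id (fun h => h.symm)
      subst hS
      have hii : i ≠ i' := fun hi => hne (by rw [hi])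
      refine Or.inr (Or.inl ⟨S, Or.inl ?_⟩)
      fin_cases i <;> fin_cases i' <;> simp_all <;> exact Sym2.eq_swap
    · -- wC S i, wI S' x'
      obtain ⟨hS, hi⟩ := h
      subst hS; subst hi
      exact Or.inr (Or.inl ⟨S, Or.inr (Or.inl ⟨x', rfl⟩)⟩)
    · -- wI S x, vA a'
      exact Or.inl ⟨S, x, by rw [Sym2.eq_swap, h]⟩
    · -- wI S x, wC S' i'
      obtain ⟨hS, hi⟩ := h
      subst hS; subst hi
      exact Or.inr (Or.inl ⟨S', Or.inr (Or.inl ⟨x, Sym2.eq_swap⟩)⟩)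
    · -- wI S x, pQ (some i')
      exact Or.inr (Or.inl ⟨S, Or.inr (Or.inr ⟨i', x, Sym2.eq_swap⟩)⟩)
    · -- pQ none, pQ none
      exact absurd rfl hne
    · -- pQ none, pQ (some i')
      exact Or.inr (Or.inr ⟨i', rfl⟩)
    · -- pQ (some i), wI S' x'
      exact Or.inr (Or.inl ⟨S', Or.inr (Or.inr ⟨i, x', rfl⟩)⟩)
    · -- pQ (some i), pQ none
      exact Or.inr (Or.inr ⟨i, Sym2.eq_swap⟩)

end Helpers

/-- If the cross-composition graph has an induced matching with at least
`k = n + |𝒞| - n/3 + 1` edges, then for some index `ℓ` there is an exact cover of `X`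
by sets of `C ℓ`. -/
theorem induced_matching_to_exactCover (n t m : ℕ) (hn3 : 3 ∣ n) (hn : 0 < n)
    (C : Fin t → Finset (Finset (Fin n)))
    (hm : ∀ i, (C i).card = m)
    (h3 : ∀ i, ∀ s ∈ C i, s.card = 3)
    (hne : ∀ i j : Fin t, i ≠ j → C i ≠ C j)
    (hmatch : ∃ M : Set (Sym2 (CCVert n t C)),
      InducedMatchingEdges (CCGraph n t C) M ∧
      n + (allSets n t C).card - n / 3 + 1 ≤ M.ncard) :
    ∃ ℓ : Fin t, ExCov (C ℓ) := by
  classical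
  obtain ⟨M, ⟨⟨hME, hMd⟩, hInd⟩, hcard⟩ := hmatch
  set K := {S // S ∈ allSets n t C} with hK
  set Sig := (Σ S : K, {x : Fin n // x ∈ S.val}) with hSig
  -- distinct edges of M are vertex-disjoint
  have huniq : ∀ e ∈ M, ∀ f ∈ M, ∀ v : CCVert n t C, v ∈ e → v ∈ f → e = f := by
    intro e he f hf v hv hv'
    by_contra hef
    exact hMd e he f hf hef v hv hv'
  -- main "induced" tool
  have link : ∀ (u v : CCVert n t C) (e f : Sym2 (CCVert n t C)), e ∈ M → f ∈ M →
      u ∈ e → v ∈ f → (CCGraph n t C).Adj u v → e = f := by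
    intro u v e f he hf hu hv hadj
    have hg : s(u, v) ∈ M := hInd u v ⟨e, he, hu⟩ ⟨f, hf, hv⟩ hadj
    have h1 := huniq e he _ hg u hu (Sym2.mem_mk_left u v)
    have h2 := huniq f hf _ hg v hv (Sym2.mem_mk_right u v)
    rw [h1, h2]
  -- the three classes of edges
  set Mv : Set (Sym2 (CCVert n t C)) :=
    {e | e ∈ M ∧ ∃ S : K, ∃ x : {x : Fin n // x ∈ S.val}, e = s(vA x.val, wI S x)} with hMv
  set Mwp : Set (Sym2 (CCVert n t C)) := {e | e ∈ M ∧ ∃ S : K, starE S e} with hMwp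
  set Mq : Set (Sym2 (CCVert n t C)) := {e | e ∈ M ∧ ∃ i, e = s(pQ none, pQ (some i))} with hMq
  set T : Set K := {S | ∃ x : {x : Fin n // x ∈ S.val}, s(vA x.val, wI S x) ∈ M} with hT
  -- extraction functions
  set fS : Sym2 (CCVert n t C) → Option Sig := fun e =>
    if h : ∃ p : Sig, e = s(vA p.2.val, wI p.1 p.2) then some h.choose else none with hfS
  set gS : Sym2 (CCVert n t C) → Option K :=
    fun e => if h : ∃ S : K, starE S e then some h.choose else none with hgS
  have hfS_spec : ∀ e ∈ Mv, ∃ p : Sig, fS e = some p ∧ e = s(vA p.2.val, wI p.1 p.2) := by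
    intro e heMv
    obtain ⟨-, S, x, hex⟩ := heMv
    have h : ∃ p : Sig, e = s(vA p.2.val, wI p.1 p.2) := ⟨⟨S, x⟩, hex⟩
    exact ⟨h.choose, by rw [hfS]; exact dif_pos h, h.choose_spec⟩
  have hgS_spec : ∀ e ∈ Mwp, ∃ S : K, gS e = some S ∧ starE S e := by
    intro e heM
    obtain ⟨-, S, hS⟩ := heM
    have h : ∃ S : K, starE S e := ⟨S, hS⟩
    exact ⟨h.choose, by rw [hgS]; exact dif_pos h, h.choose_spec⟩
  -- at most one edge of M per star
  have keyWP : ∀ S : K, ∀ e ∈ M, ∀ f ∈ M, starE S e → starE S f → e = f := by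
    intro S e he f hf hse hsf
    rcases hse with he1 | ⟨x, hex⟩ | ⟨i, x, hex⟩ <;>
      rcases hsf with hf1 | ⟨x', hfx⟩ | ⟨i', x', hfx⟩
    · rw [he1, hf1]
    · exact huniq e he f hf (wC S 0) (he1 ▸ Sym2.mem_mk_left _ _) (hfx ▸ Sym2.mem_mk_left _ _)
    · exact link (wC S 0) (wI S x') e f he hf (he1 ▸ Sym2.mem_mk_left _ _)
        (hfx ▸ Sym2.mem_mk_right _ _) (adj_wC_wI S x')
    · exact huniq e he f hf (wC S 0) (hex ▸ Sym2.mem_mk_left _ _) (hf1 ▸ Sym2.mem_mk_left _ _)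
    · exact huniq e he f hf (wC S 0) (hex ▸ Sym2.mem_mk_left _ _) (hfx ▸ Sym2.mem_mk_left _ _)
    · exact link (wC S 0) (wI S x') e f he hf (hex ▸ Sym2.mem_mk_left _ _)
        (hfx ▸ Sym2.mem_mk_right _ _) (adj_wC_wI S x')
    · exact (link (wC S 0) (wI S x) f e hf he (hf1 ▸ Sym2.mem_mk_left _ _)
        (hex ▸ Sym2.mem_mk_right _ _) (adj_wC_wI S x)).symm
    · exact (link (wC S 0) (wI S x) f e hf he (hfx ▸ Sym2.mem_mk_left _ _)
        (hex ▸ Sym2.mem_mk_right _ _) (adj_wC_wI S x)).symm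
    · have hcond : S.val ∉ C i := p_edge_cond (hex ▸ hME he)
      exact link (pQ (some i)) (wI S x') e f he hf (hex ▸ Sym2.mem_mk_left _ _)
        (hfx ▸ Sym2.mem_mk_right _ _) (adj_p_wI hcond x')
  -- a star supporting a v-edge supports no wp-edge
  have keyT : ∀ S ∈ T, ∀ e ∈ M, ¬ starE S e := by
    intro S hST e he hse
    obtain ⟨x, hx⟩ := hST
    rcases hse with he1 | ⟨x', hex⟩ | ⟨i, x', hex⟩
    · have := link (wC S 0) (wI S x) e _ he hx (he1 ▸ Sym2.mem_mk_left _ _)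
        (Sym2.mem_mk_right _ _) (adj_wC_wI S x)
      rw [he1] at this
      simp [Sym2.eq_iff] at this
    · have := link (wC S 0) (wI S x) e _ he hx (hex ▸ Sym2.mem_mk_left _ _)
        (Sym2.mem_mk_right _ _) (adj_wC_wI S x)
      rw [hex] at this
      simp [Sym2.eq_iff] at this
    · have hcond : S.val ∉ C i := p_edge_cond (hex ▸ hME he)
      have := link (pQ (some i)) (wI S x) e _ he hx (hex ▸ Sym2.mem_mk_left _ _)
        (Sym2.mem_mk_right _ _) (adj_p_wI hcond x)
      rw [hex] at this
      simp [Sym2.eq_iff] at this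
  -- partition of M
  have hMeq : M = Mv ∪ Mwp ∪ Mq := by
    ext e
    constructor
    · intro he
      rcases edge_class (hME he) with ⟨S, x, hex⟩ | ⟨S, hS⟩ | ⟨i, hex⟩
      · exact Or.inl (Or.inl ⟨he, S, x, hex⟩)
      · exact Or.inl (Or.inr ⟨he, S, hS⟩)
      · exact Or.inr ⟨he, i, hex⟩
    · rintro ((⟨he, -⟩ | ⟨he, -⟩) | ⟨he, -⟩) <;> exact he
  have hsum : M.ncard = Mv.ncard + Mwp.ncard + Mq.ncard := by
    have hd1 : Disjoint Mv Mwp := by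
      rw [Set.disjoint_left]
      rintro e ⟨-, S, x, rfl⟩ ⟨-, S', hS'⟩
      rcases hS' with h | ⟨x', h⟩ | ⟨i, x', h⟩ <;> simp [Sym2.eq_iff] at h
    have hd2 : Disjoint (Mv ∪ Mwp) Mq := by
      rw [Set.disjoint_left]
      rintro e (⟨-, S, x, rfl⟩ | ⟨-, S', hS'⟩) ⟨-, i, h⟩
      · simp [Sym2.eq_iff] at h
      · rcases hS' with h' | ⟨x', h'⟩ | ⟨i', x', h'⟩ <;> (rw [h'] at h; simp [Sym2.eq_iff] at h)
    rw [hMeq, Set.ncard_union_eq hd2 (Set.toFinite _) (Set.toFinite _),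
      Set.ncard_union_eq hd1 (Set.toFinite _) (Set.toFinite _)]
  -- the `v`-edges are counted by the interface vertices of stars in `T`
  have hinj_fS : Set.InjOn fS Mv := by
    intro e heMv f hfMv hef
    obtain ⟨p, hp1, hp2⟩ := hfS_spec e heMv
    obtain ⟨p', hp1', hp2'⟩ := hfS_spec f hfMv
    rw [hp1, hp1'] at hef
    obtain rfl : p = p' := Option.some_injective _ hef
    rw [hp2, hp2']
  have hsub_fS : fS '' Mv ⊆ some '' {p : Sig | p.1 ∈ T} := by
    rintro o ⟨e, heMv, rfl⟩
    obtain ⟨p, hp1, hp2⟩ := hfS_spec e heMv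
    refine ⟨p, ⟨p.2, ?_⟩, hp1.symm⟩
    rw [← hp2]; exact heMv.1
  have hcard_sig : {p : Sig | p.1 ∈ T}.ncard = 3 * T.ncard := by
    have hTfin : T.Finite := Set.toFinite _
    have hset : {p : Sig | p.1 ∈ T} =
        ↑(hTfin.toFinset.sigma
          (fun S => (Finset.univ : Finset {x : Fin n // x ∈ S.val}))) := by
      ext p
      simp only [Set.mem_setOf_eq, Finset.coe_sigma, Set.mem_sigma_iff, Finset.coe_univ,
        Set.mem_univ, and_true, Set.Finite.coe_toFinset]
      exact ⟨fun h => Finset.mem_sigma.2 ⟨(Set.Finite.mem_toFinset hTfin).2 h, Finset.mem_univ _⟩,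
        fun h => (Set.Finite.mem_toFinset hTfin).1 (Finset.mem_sigma.1 h).1⟩
    rw [hset, Set.ncard_coe_finset, Finset.card_sigma]
    have hthree : ∀ S ∈ hTfin.toFinset,
        (Finset.univ : Finset {x : Fin n // x ∈ S.val}).card = 3 := by
      intro S hS
      rw [Finset.card_univ, Fintype.card_coe]
      obtain ⟨i, -, hi⟩ := Finset.mem_biUnion.1 S.property
      exact h3 i _ hi
    rw [Finset.sum_congr rfl hthree, Finset.sum_const, smul_eq_mul, mul_comm]
    congr 1
    rw [Set.ncard_eq_toFinset_card T hTfin]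
  have hMv_le_T : Mv.ncard ≤ 3 * T.ncard := by
    calc Mv.ncard = (fS '' Mv).ncard := (Set.ncard_image_of_injOn hinj_fS).symm
      _ ≤ (some '' {p : Sig | p.1 ∈ T}).ncard := Set.ncard_le_ncard hsub_fS (Set.toFinite _)
      _ = {p : Sig | p.1 ∈ T}.ncard :=
          Set.ncard_image_of_injective _ (Option.some_injective _)
      _ = 3 * T.ncard := hcard_sig
  -- the `v`-edges are counted by `Fin n`
  set fA : Sym2 (CCVert n t C) → Option (Fin n) :=
    fun e => (fS e).map (fun p : Sig => p.2.val) with hfA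
  have hfA_spec : ∀ e ∈ Mv, ∃ p : Sig, fA e = some p.2.val ∧ e = s(vA p.2.val, wI p.1 p.2) := by
    intro e heMv
    obtain ⟨p, hp1, hp2⟩ := hfS_spec e heMv
    exact ⟨p, by rw [hfA]; simp [hp1], hp2⟩
  have hinj_fA : Set.InjOn fA Mv := by
    intro e heMv f hfMv hef
    obtain ⟨p, hp1, hp2⟩ := hfA_spec e heMv
    obtain ⟨p', hp1', hp2'⟩ := hfA_spec f hfMv
    rw [hp1, hp1'] at hef
    have hval : p.2.val = p'.2.val := Option.some_injective _ hef
    refine huniq e heMv.1 f hfMv.1 (vA p.2.val) ?_ ?_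
    · rw [hp2]; exact Sym2.mem_mk_left _ _
    · rw [hp2', ← hval]; exact Sym2.mem_mk_left _ _
  have hsub_fA : fA '' Mv ⊆ some '' (Set.univ : Set (Fin n)) := by
    rintro o ⟨e, heMv, rfl⟩
    obtain ⟨p, hp1, hp2⟩ := hfA_spec e heMv
    exact ⟨p.2.val, trivial, hp1.symm⟩
  have hMv_le_n : Mv.ncard ≤ n := by
    calc Mv.ncard = (fA '' Mv).ncard := (Set.ncard_image_of_injOn hinj_fA).symm
      _ ≤ (some '' (Set.univ : Set (Fin n))).ncard := Set.ncard_le_ncard hsub_fA (Set.toFinite _)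
      _ = (Set.univ : Set (Fin n)).ncard :=
          Set.ncard_image_of_injective _ (Option.some_injective _)
      _ = n := by rw [Set.ncard_univ, Nat.card_eq_fintype_card, Fintype.card_fin]
  -- the `wp`-edges and `T` together are counted by the stars
  have hMwp_T : Mwp.ncard + T.ncard ≤ (allSets n t C).card := by
    have hinj_gS : Set.InjOn gS Mwp := by
      intro e heMv f hfMv hef
      obtain ⟨S, hS1, hS2⟩ := hgS_spec e heMv
      obtain ⟨S', hS1', hS2'⟩ := hgS_spec f hfMv
      rw [hS1, hS1'] at hef
      obtain rfl : S = S' := Option.some_injective _ hef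
      exact keyWP S e heMv.1 f hfMv.1 hS2 hS2'
    have hd : Disjoint (gS '' Mwp) (some '' T) := by
      rw [Set.disjoint_left]
      rintro o ⟨e, heMv, rfl⟩ ⟨S', hS', hSo⟩
      obtain ⟨S, hS1, hS2⟩ := hgS_spec e heMv
      rw [hS1] at hSo
      obtain rfl : S' = S := Option.some_injective _ hSo
      exact keyT S' hS' e heMv.1 hS2
    have hsub : gS '' Mwp ∪ some '' T ⊆ some '' (Set.univ : Set K) := by
      rintro o (⟨e, heMv, rfl⟩ | ⟨S, hS, rfl⟩)
      · obtain ⟨S, hS1, hS2⟩ := hgS_spec e heMv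
        exact ⟨S, trivial, hS1.symm⟩
      · exact ⟨S, trivial, rfl⟩
    calc Mwp.ncard + T.ncard = (gS '' Mwp).ncard + (some '' T).ncard := by
          rw [Set.ncard_image_of_injOn hinj_gS,
            Set.ncard_image_of_injective _ (Option.some_injective _)]
      _ = (gS '' Mwp ∪ some '' T).ncard :=
          (Set.ncard_union_eq hd (Set.toFinite _) (Set.toFinite _)).symm
      _ ≤ (some '' (Set.univ : Set K)).ncard := Set.ncard_le_ncard hsub (Set.toFinite _)
      _ = (Set.univ : Set K).ncard :=
          Set.ncard_image_of_injective _ (Option.some_injective _)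
      _ = (allSets n t C).card := by
          rw [Set.ncard_univ, Nat.card_eq_fintype_card, Fintype.card_coe]
  -- at most one `q`-edge
  have hMq_1 : Mq.ncard ≤ 1 := by
    rw [Set.ncard_le_one (Set.toFinite _)]
    rintro e ⟨he, i, hei⟩ f ⟨hf, i', hfi⟩
    refine huniq e he f hf (pQ none) ?_ ?_
    · rw [hei]; exact Sym2.mem_mk_left _ _
    · rw [hfi]; exact Sym2.mem_mk_left _ _
  -- arithmetic
  obtain ⟨hT3, hMvn, hMq0⟩ : 3 * T.ncard = n ∧ Mv.ncard = n ∧ Mq.ncard ≠ 0 := by omega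
  -- the distinguished index
  obtain ⟨e₀, he₀⟩ := Set.nonempty_of_ncard_ne_zero hMq0
  obtain ⟨he₀M, ℓ, he₀q⟩ := he₀
  -- every interface vertex of a star in `T` is matched to its `v`-vertex
  have heqB : fS '' Mv = some '' {p : Sig | p.1 ∈ T} := by
    refine Set.eq_of_subset_of_ncard_le hsub_fS ?_ (Set.toFinite _)
    rw [Set.ncard_image_of_injective _ (Option.some_injective _), hcard_sig,
      Set.ncard_image_of_injOn hinj_fS]
    omega
  have hBsurj : ∀ S ∈ T, ∀ x : {x : Fin n // x ∈ S.val}, s(vA x.val, wI S x) ∈ M := by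
    intro S hS x
    have hmem : some (⟨S, x⟩ : Sig) ∈ fS '' Mv := by
      rw [heqB]; exact ⟨⟨S, x⟩, hS, rfl⟩
    obtain ⟨e, heMv, hfe⟩ := hmem
    obtain ⟨p, hp1, hp2⟩ := hfS_spec e heMv
    rw [hp1] at hfe
    obtain rfl : p = ⟨S, x⟩ := Option.some_injective _ hfe
    rw [← hp2]; exact heMv.1
  -- every element of `Fin n` is covered by some star in `T`
  have heqA : fA '' Mv = some '' (Set.univ : Set (Fin n)) := by
    refine Set.eq_of_subset_of_ncard_le hsub_fA ?_ (Set.toFinite _)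
    rw [Set.ncard_image_of_injective _ (Option.some_injective _),
      Set.ncard_image_of_injOn hinj_fA, Set.ncard_univ, Nat.card_eq_fintype_card,
      Fintype.card_fin]
    omega
  have hAcov : ∀ a : Fin n, ∃ S : K, S ∈ T ∧ a ∈ S.val := by
    intro a
    have hmem : some a ∈ fA '' Mv := by
      rw [heqA]; exact ⟨a, trivial, rfl⟩
    obtain ⟨e, heMv, hfe⟩ := hmem
    obtain ⟨p, hp1, hp2⟩ := hfA_spec e heMv
    rw [hp1] at hfe
    have hval : p.2.val = a := Option.some_injective _ hfe
    refine ⟨p.1, ⟨p.2, ?_⟩, hval ▸ p.2.property⟩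
    rw [← hp2]; exact heMv.1
  -- every star in `T` belongs to `C ℓ`
  have hTC : ∀ S ∈ T, S.val ∈ C ℓ := by
    intro S hS
    by_contra hSC
    obtain ⟨x, hx⟩ := hS
    have heq := link (pQ (some ℓ)) (wI S x) e₀ _ he₀M hx
      (by rw [he₀q]; exact Sym2.mem_mk_right _ _) (Sym2.mem_mk_right _ _) (adj_p_wI hSC x)
    rw [he₀q] at heq
    simp [Sym2.eq_iff] at heq
  -- the stars in `T` are pairwise disjoint
  have hTdisj : ∀ S ∈ T, ∀ S' ∈ T, S ≠ S' → Disjoint S.val S'.val := by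
    intro S hS S' hS' hSS'
    rw [Finset.disjoint_left]
    intro a haS haS'
    have h1 := hBsurj S hS ⟨a, haS⟩
    have h2 := hBsurj S' hS' ⟨a, haS'⟩
    have heq := huniq _ h1 _ h2 (vA a) (Sym2.mem_mk_left _ _) (Sym2.mem_mk_left _ _)
    simp [Sym2.eq_iff] at heq
    exact hSS' heq.1
  -- assemble the exact cover
  refine ⟨ℓ, (T.toFinite.toFinset).image Subtype.val, ?_, ?_, ?_⟩
  · intro s hs
    simp only [Finset.mem_image, Set.Finite.mem_toFinset] at hs
    obtain ⟨S, hS, rfl⟩ := hs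
    exact hTC S hS
  · intro s hs s' hs' hss'
    simp only [Finset.mem_image, Set.Finite.mem_toFinset] at hs hs'
    obtain ⟨S, hS, rfl⟩ := hs
    obtain ⟨S', hS', rfl⟩ := hs'
    exact hTdisj S hS S' hS' (fun h => hss' (congrArg Subtype.val h))
  · ext a
    simp only [Finset.mem_biUnion, Finset.mem_univ, iff_true, Finset.mem_image,
      Set.Finite.mem_toFinset, id]
    obtain ⟨S, hS, ha⟩ := hAcov a
    exact ⟨S.val, ⟨S, hS, rfl⟩, ha⟩
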